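/- Telescoped partial-update inequality. Let M ≥ 1, let E be a real inner product space, let C = (C_{ij}) be a real M×M matrix with C_{ij} = C_{ji} for all i, j and C_{ii} ≥ 0 for all i, and let a_1,…,a_M, b_1,…,b_M ∈ E. Then ½ Σ_{i,j=1}^M C_{ij} ⟨a_i, a_j⟩ − ½ Σ_{i,j=1}^M C_{ij} ⟨b_i, b_j⟩ ≤ Σ_{i=1}^M ( Σ_{j≤i} C_{ij} ⟨a_i − b_i, a_j⟩ + Σ_{j>i} C_{ij} ⟨a_i − b_i, b_j⟩ ). -/

import Mathlib

/-- telescoped partial-update inequality.  For a symmetric matrix `C`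
with nonnegative diagonal and vectors `a j, b j` in a real inner product space:
`½ ∑_{i,j} C i j ⟪a i, a j⟫ − ½ ∑_{i,j} C i j ⟪b i, b j⟫
  ≤ ∑ i (∑_{j ≤ i} C i j ⟪a i − b i, a j⟫ + ∑_{j > i} C i j ⟪a i − b i, b j⟫)`. -/
theorem telescoped_partial_update_inequality {M : ℕ} (hM : 1 ≤ M)
    {E : Type*} [NormedAddCommGroup E] [InnerProductSpace ℝ E]
    (C : Matrix (Fin M) (Fin M) ℝ)
    (hsym : ∀ i j, C i j = C j i)
    (hdiag : ∀ i, 0 ≤ C i i)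
    (a b : Fin M → E) :
    (1/2) * ∑ i, ∑ j, C i j * (inner ℝ (a i) (a j) : ℝ)
      - (1/2) * ∑ i, ∑ j, C i j * (inner ℝ (b i) (b j) : ℝ)
      ≤ ∑ i : Fin M,
          (∑ j ∈ Finset.univ.filter (fun j : Fin M => (j : ℕ) ≤ (i : ℕ)),
              C i j * (inner ℝ (a i - b i) (a j) : ℝ)
           + ∑ j ∈ Finset.univ.filter (fun j : Fin M => (i : ℕ) < (j : ℕ)),
              C i j * (inner ℝ (a i - b i) (b j) : ℝ)) := by
  classical
  -- split a full sum into j ≤ i and j > i parts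
  have F1 : ∀ (f : Fin M → ℝ) (i : Fin M),
      (∑ j, f j)
        = (∑ j ∈ Finset.univ.filter (fun j : Fin M => (j : ℕ) ≤ (i : ℕ)), f j)
          + ∑ j ∈ Finset.univ.filter (fun j : Fin M => (i : ℕ) < (j : ℕ)), f j := by
    intro f i
    rw [← Finset.sum_filter_add_sum_filter_not Finset.univ
        (fun j : Fin M => (j : ℕ) ≤ (i : ℕ)) f]
    congr 1
    refine Finset.sum_congr ?_ fun _ _ => rfl
    apply Finset.filter_congr
    intro j _
    simp [not_le]
  -- split the j ≤ i sum into the diagonal j = i and j < i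
  have F2 : ∀ (f : Fin M → ℝ) (i : Fin M),
      (∑ j ∈ Finset.univ.filter (fun j : Fin M => (j : ℕ) ≤ (i : ℕ)), f j)
        = f i + ∑ j ∈ Finset.univ.filter (fun j : Fin M => (j : ℕ) < (i : ℕ)), f j := by
    intro f i
    have h : Finset.univ.filter (fun j : Fin M => (j : ℕ) ≤ (i : ℕ))
        = insert i (Finset.univ.filter (fun j : Fin M => (j : ℕ) < (i : ℕ))) := by
      ext j
      simp only [Finset.mem_insert, Finset.mem_filter, Finset.mem_univ, true_and,
        Fin.ext_iff]
      omega
    rw [h, Finset.sum_insert (by simp)]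
  -- swap the order of summation in the strict upper-triangular sum
  have F3 : ∀ (h : Fin M → Fin M → ℝ),
      (∑ i : Fin M, ∑ j ∈ Finset.univ.filter (fun j : Fin M => (i : ℕ) < (j : ℕ)), h i j)
        = ∑ i : Fin M, ∑ j ∈ Finset.univ.filter (fun j : Fin M => (j : ℕ) < (i : ℕ)), h j i := by
    intro h
    rw [Finset.sum_comm' (t' := (Finset.univ : Finset (Fin M)))
      (s' := fun y : Fin M => Finset.univ.filter (fun x : Fin M => (x : ℕ) < (y : ℕ)))]
    intro x y
    simp
  -- canonical form of the full quadratic sum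
  have doub : ∀ x : Fin M → E,
      (∑ i, ∑ j, C i j * (inner ℝ (x i) (x j) : ℝ))
        = ∑ i : Fin M, (C i i * (inner ℝ (x i) (x i) : ℝ)
            + 2 * ∑ j ∈ Finset.univ.filter (fun j : Fin M => (j : ℕ) < (i : ℕ)),
                C i j * (inner ℝ (x i) (x j) : ℝ)) := by
    intro x
    calc (∑ i, ∑ j, C i j * (inner ℝ (x i) (x j) : ℝ))
        = ∑ i : Fin M,
            ((∑ j ∈ Finset.univ.filter (fun j : Fin M => (j : ℕ) ≤ (i : ℕ)),
                C i j * (inner ℝ (x i) (x j) : ℝ))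
              + ∑ j ∈ Finset.univ.filter (fun j : Fin M => (i : ℕ) < (j : ℕ)),
                C i j * (inner ℝ (x i) (x j) : ℝ)) :=
          Finset.sum_congr rfl fun i _ => F1 _ i
      _ = (∑ i : Fin M, ∑ j ∈ Finset.univ.filter (fun j : Fin M => (j : ℕ) ≤ (i : ℕ)),
              C i j * (inner ℝ (x i) (x j) : ℝ))
          + ∑ i : Fin M, ∑ j ∈ Finset.univ.filter (fun j : Fin M => (i : ℕ) < (j : ℕ)),
              C i j * (inner ℝ (x i) (x j) : ℝ) := Finset.sum_add_distrib
      _ = (∑ i : Fin M, ((C i i * (inner ℝ (x i) (x i) : ℝ))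
              + ∑ j ∈ Finset.univ.filter (fun j : Fin M => (j : ℕ) < (i : ℕ)),
                  C i j * (inner ℝ (x i) (x j) : ℝ)))
          + ∑ i : Fin M, ∑ j ∈ Finset.univ.filter (fun j : Fin M => (j : ℕ) < (i : ℕ)),
              C j i * (inner ℝ (x j) (x i) : ℝ) := by
          rw [F3]
          congr 1
          exact Finset.sum_congr rfl fun i _ => F2 _ i
      _ = ∑ i : Fin M, (C i i * (inner ℝ (x i) (x i) : ℝ)
            + 2 * ∑ j ∈ Finset.univ.filter (fun j : Fin M => (j : ℕ) < (i : ℕ)),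
                C i j * (inner ℝ (x i) (x j) : ℝ)) := by
          rw [← Finset.sum_add_distrib]
          refine Finset.sum_congr rfl fun i _ => ?_
          have : (∑ j ∈ Finset.univ.filter (fun j : Fin M => (j : ℕ) < (i : ℕ)),
              C j i * (inner ℝ (x j) (x i) : ℝ))
              = ∑ j ∈ Finset.univ.filter (fun j : Fin M => (j : ℕ) < (i : ℕ)),
                C i j * (inner ℝ (x i) (x j) : ℝ) := by
            refine Finset.sum_congr rfl fun j _ => ?_
            rw [hsym j i, real_inner_comm (x j) (x i)]
          rw [this]; ring
  -- canonical form of the left-hand side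
  have key_lhs :
      (1/2) * (∑ i, ∑ j, C i j * (inner ℝ (a i) (a j) : ℝ))
        - (1/2) * ∑ i, ∑ j, C i j * (inner ℝ (b i) (b j) : ℝ)
      = ∑ i : Fin M,
          ((1/2) * (C i i * (inner ℝ (a i) (a i) : ℝ) - C i i * (inner ℝ (b i) (b i) : ℝ))
            + ∑ j ∈ Finset.univ.filter (fun j : Fin M => (j : ℕ) < (i : ℕ)),
                (C i j * (inner ℝ (a i) (a j) : ℝ) - C i j * (inner ℝ (b i) (b j) : ℝ))) := by
    rw [doub a, doub b, Finset.mul_sum, Finset.mul_sum, ← Finset.sum_sub_distrib]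
    refine Finset.sum_congr rfl fun i _ => ?_
    rw [Finset.sum_sub_distrib]
    ring
  -- canonical form of the right-hand side
  have key_rhs :
      (∑ i : Fin M,
          (∑ j ∈ Finset.univ.filter (fun j : Fin M => (j : ℕ) ≤ (i : ℕ)),
              C i j * (inner ℝ (a i - b i) (a j) : ℝ)
           + ∑ j ∈ Finset.univ.filter (fun j : Fin M => (i : ℕ) < (j : ℕ)),
              C i j * (inner ℝ (a i - b i) (b j) : ℝ)))
      = ∑ i : Fin M,
          (C i i * (inner ℝ (a i - b i) (a i) : ℝ)
            + ∑ j ∈ Finset.univ.filter (fun j : Fin M => (j : ℕ) < (i : ℕ)),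
                (C i j * (inner ℝ (a i) (a j) : ℝ) - C i j * (inner ℝ (b i) (b j) : ℝ))) := by
    rw [Finset.sum_add_distrib, F3 (fun i j => C i j * (inner ℝ (a i - b i) (b j) : ℝ))]
    have h1 : (∑ i : Fin M,
        ∑ j ∈ Finset.univ.filter (fun j : Fin M => (j : ℕ) ≤ (i : ℕ)),
          C i j * (inner ℝ (a i - b i) (a j) : ℝ))
        = ∑ i : Fin M, (C i i * (inner ℝ (a i - b i) (a i) : ℝ)
            + ∑ j ∈ Finset.univ.filter (fun j : Fin M => (j : ℕ) < (i : ℕ)),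
              C i j * (inner ℝ (a i - b i) (a j) : ℝ)) :=
      Finset.sum_congr rfl fun i _ => F2 _ i
    rw [h1, Finset.sum_add_distrib, add_assoc, ← Finset.sum_add_distrib,
      ← Finset.sum_add_distrib]
    refine Finset.sum_congr rfl fun i _ => ?_
    congr 1
    rw [← Finset.sum_add_distrib]
    refine Finset.sum_congr rfl fun j _ => ?_
    rw [hsym j i, inner_sub_left, inner_sub_left,
      real_inner_comm (a j) (b i), real_inner_comm (b j) (b i)]
    ring
  rw [key_lhs, key_rhs]
  refine Finset.sum_le_sum fun i _ => ?_
  have hq : (0:ℝ) ≤ C i i * (inner ℝ (a i - b i) (a i - b i) : ℝ) :=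
    mul_nonneg (hdiag i) real_inner_self_nonneg
  have hexp : (inner ℝ (a i - b i) (a i - b i) : ℝ)
      = inner ℝ (a i) (a i) - 2 * inner ℝ (a i) (b i) + inner ℝ (b i) (b i) := by
    rw [inner_sub_left, inner_sub_right, inner_sub_right, real_inner_comm (b i) (a i)]
    ring
  have hd : (inner ℝ (a i - b i) (a i) : ℝ) = inner ℝ (a i) (a i) - inner ℝ (a i) (b i) := by
    rw [inner_sub_left, real_inner_comm (b i) (a i)]
  rw [hexp] at hq
  rw [hd]
  nlinarith [hq]
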